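/- Let η be a quasi-Kähler torsion-type tensor on (V,J), let W ⊆ V be a J-invariant subspace with η_v w ∈ W for all v,w ∈ W, let λ be a nonzero real number, and let ρ : V → V be a linear map such that ρ(u) = λ J(u) for every u ∈ W and ρ(η_v w) = η_{ρ(v)} w + η_v(ρ(w)) for all v,w ∈ W. Then η_v w = 0 for all v,w ∈ W. (This is the key step in the proof of Theorem 1.1, applied to the partial Hermitian Ricci tensor ρ̄ acting as λJ on the eigenspace W₁, which forces η_{W₁}W₁ = 0 and hence the vanishing of W₁.) -/
import Mathlib


open scoped InnerProductSpace

/-- Key step in the proof of Theorem 1.1. If a quasi-Kähler torsion-type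
tensor η preserves a J-invariant subspace W, and a linear map ρ acts as `λ • J` on W
and is a derivation of η on W, with `λ ≠ 0`, then `η v w = 0` for all `v, w ∈ W`. -/
theorem eta_vanishes_on_eigenspace
    {V : Type*} [NormedAddCommGroup V] [InnerProductSpace ℝ V] [FiniteDimensional ℝ V]
    (J : V →ₗ[ℝ] V)
    (hJiso : ∀ x y : V, ⟪J x, J y⟫_ℝ = ⟪x, y⟫_ℝ)
    (hJJ : ∀ x : V, J (J x) = -x)
    (η : V →ₗ[ℝ] V →ₗ[ℝ] V)
    (hskew : ∀ x y z : V, ⟪η x y, z⟫_ℝ = -⟪y, η x z⟫_ℝ)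
    (hanti : ∀ x y : V, η x (J y) = -J (η x y))
    (hQK : ∀ x y : V, η (J x) (J y) = -η x y)
    (W : Submodule ℝ V)
    (hJW : ∀ v ∈ W, J v ∈ W)
    (hetaW : ∀ v ∈ W, ∀ w ∈ W, η v w ∈ W)
    (lam : ℝ) (hlam : lam ≠ 0)
    (ρ : V →ₗ[ℝ] V)
    (hρW : ∀ u ∈ W, ρ u = lam • J u)
    (hρder : ∀ v ∈ W, ∀ w ∈ W, ρ (η v w) = η (ρ v) w + η v (ρ w)) :
    ∀ v ∈ W, ∀ w ∈ W, η v w = 0 := by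
  have key : ∀ v ∈ W, ∀ w ∈ W, η (J v) w = (2 : ℝ) • J (η v w) := by
    intro v hv w hw
    have h := hρder v hv w hw
    rw [hρW _ (hetaW v hv w hw), hρW v hv, hρW w hw] at h
    simp only [map_smul, LinearMap.smul_apply, hanti] at h
    have h3 : lam • ((2 : ℝ) • J ((η v) w)) = lam • (η (J v)) w := by
      linear_combination (norm := module) h
    exact (smul_right_injective V hlam h3).symm
  intro v hv w hw
  have h1 := key v hv w hw
  have h2 := key (J v) (hJW v hv) w hw
  rw [hJJ, map_neg, h1, map_smul, hJJ] at h2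
  have h3 : (3 : ℝ) • (η v) w = 0 := by
    have h4 : -((η v) w) = (2 : ℝ) • (2 : ℝ) • -((η v) w) := by simpa using h2
    linear_combination (norm := module) h4
  exact (smul_eq_zero.mp h3).resolve_left (by norm_num)
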